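/- The homology class of a simple closed curve on the torus has coprime coordinates: if γ is an injective continuous loop on the torus T² = ℝ²/ℤ² representing the class (n,m) ∈ H₁(T²;ℤ) ≅ ℤ² with (n,m) ≠ (0,0), then gcd(n,m) = 1. -/

import Mathlib

open Set

set_option maxHeartbeats 1000000

noncomputable section

open Classical in
noncomputable def stairFun (f : ℝ → ℝ) (d h c : ℝ) : ℕ → ℝ
  | 0 => c
  | k+1 =>
    let x := stairFun f d h c k
    if ({t : ℝ | t ∈ Icc x d ∧ |f t - f x| = h}).Nonempty
      then sInf {t : ℝ | t ∈ Icc x d ∧ |f t - f x| = h} else x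

lemma staircase (f : ℝ → ℝ) (hf : Continuous f) {c d m M h : ℝ} (hcd : c < d)
    (hfc : f c = M) (hfd : f d = m)
    (hub : ∀ t ∈ Icc c d, f t ≤ M) (hlb : ∀ t ∈ Icc c d, m ≤ f t)
    {Q : ℕ} (hQ : 1 ≤ Q) (hh : h = (M - m) / Q) (hmM : m < M) :
    ∃ (N : ℕ) (u : ℕ → ℝ) (v : ℕ → ℤ),
      1 ≤ N ∧ u 0 = c ∧
      (∀ k, k ≤ N → u k ∈ Icc c d) ∧
      (∀ k, k < N → u k ≤ u (k+1)) ∧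
      (∀ k, k ≤ N → f (u k) = m + h * v k) ∧
      v 0 = Q ∧ v N = 0 ∧
      (∀ k, k < N → v (k+1) - v k = 1 ∨ v (k+1) - v k = -1) ∧
      (∀ k, k ≤ N → 0 ≤ v k ∧ v k ≤ Q) ∧
      (∀ k, k < N → ∀ t ∈ Icc (u k) (u (k+1)), |f t - f (u k)| ≤ h) ∧
      (∀ t ∈ Icc (u N) d, |f t - m| ≤ h) := by
  classical
  have hQR : (0:ℝ) < Q := by positivity
  have hMm : 0 < M - m := by linarith
  have hpos : 0 < h := by rw [hh]; positivity
  have hhQ : h * Q = M - m := by rw [hh]; field_simp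
  set u := stairFun f d h c with hu
  set S : ℝ → Set ℝ := fun x => {t : ℝ | t ∈ Icc x d ∧ |f t - f x| = h} with hS
  -- basic facts about one step
  have Sclosed : ∀ x, IsClosed (S x) := by
    intro x
    have : S x = Icc x d ∩ (fun t => |f t - f x|) ⁻¹' {h} := by
      ext t
      simp only [hS, Set.mem_setOf_eq, Set.mem_inter_iff, Set.mem_preimage,
        Set.mem_singleton_iff]
    rw [this]
    exact isClosed_Icc.inter (IsClosed.preimage ((hf.sub continuous_const).abs) isClosed_singleton)
  have Sbdd : ∀ x, BddBelow (S x) := by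
    intro x; exact ⟨x, fun t ht => ht.1.1⟩
  have fact1 : ∀ x, (S x).Nonempty → sInf (S x) ∈ S x :=
    fun x hx => (Sclosed x).csInf_mem hx (Sbdd x)
  have fact1' : ∀ x, (S x).Nonempty → sInf (S x) ∈ Icc x d ∧ |f (sInf (S x)) - f x| = h :=
    fun x hx => fact1 x hx
  have fact2 : ∀ x, (S x).Nonempty → ∀ t ∈ Icc x (sInf (S x)), |f t - f x| ≤ h := by
    intro x hx t ht
    by_contra hgt
    push_neg at hgt
    have hxi := fact1' x hx
    have hxd : x ≤ t := ht.1
    have : h ∈ Icc (|f x - f x|) (|f t - f x|) := by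
      constructor
      · simp [hpos.le]
      · exact hgt.le
    obtain ⟨t', ht', hft'⟩ := intermediate_value_Icc hxd
      (((hf.sub continuous_const).abs).continuousOn) this
    have ht'S : t' ∈ S x := by
      exact ⟨⟨ht'.1, le_trans ht'.2 (le_trans ht.2 hxi.1.2)⟩, hft'⟩
    have : sInf (S x) ≤ t' := csInf_le (Sbdd x) ht'S
    have : t' = t := le_antisymm ht'.2 (le_trans ht.2 this)
    rw [this] at hft'
    exact absurd hft' (ne_of_lt hgt).symm
  have fact3 : ∀ x, x ∈ Icc c d → m + h ≤ f x → (S x).Nonempty := by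
    intro x hx hfx
    have : h ∈ Icc (|f x - f x|) (|f d - f x|) := by
      constructor
      · simp [hpos.le]
      · rw [hfd, abs_sub_comm, abs_of_nonneg (by linarith)]
        linarith
    obtain ⟨t, ht, hft⟩ := intermediate_value_Icc hx.2
      (((hf.sub continuous_const).abs).continuousOn) this
    exact ⟨t, ⟨ht, hft⟩⟩
  have fact4 : ∀ x, x ∈ Icc c d → ¬ (S x).Nonempty → ∀ t ∈ Icc x d, |f t - f x| < h := by
    intro x hx hempty t ht
    rcases lt_or_ge (|f t - f x|) h with h1 | h1
    · exact h1
    · exfalso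
      have : h ∈ Icc (|f x - f x|) (|f t - f x|) := by
        constructor
        · simp [hpos.le]
        · exact h1
      obtain ⟨t', ht', hft'⟩ := intermediate_value_Icc ht.1
        (((hf.sub continuous_const).abs).continuousOn) this
      exact hempty ⟨t', ⟨⟨ht'.1, le_trans ht'.2 ht.2⟩, hft'⟩⟩
  -- step equation
  have ustep : ∀ k, (S (u k)).Nonempty → u (k+1) = sInf (S (u k)) := by
    intro k hk
    show stairFun f d h c (k+1) = _
    rw [stairFun]
    simp only [← hu, ← hS]
    rw [if_pos hk]
  have ustep' : ∀ k, ¬(S (u k)).Nonempty → u (k+1) = u k := by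
    intro k hk
    show stairFun f d h c (k+1) = _
    rw [stairFun]
    simp only [← hu, ← hS]
    rw [if_neg hk]
  -- invariant
  have hInv : ∀ k, u k ∈ Icc c d ∧ ∃ j : ℤ, f (u k) = m + h * j := by
    intro k
    induction k with
    | zero =>
      have hu0 : u 0 = c := rfl
      refine ⟨⟨le_of_eq hu0, hu0 ▸ hcd.le⟩, ⟨Q, ?_⟩⟩
      rw [hu0, hfc]
      push_cast
      linarith
    | succ k ih =>
      by_cases hk : (S (u k)).Nonempty
      · rw [ustep k hk]
        have h1 := fact1' (u k) hk
        obtain ⟨j, hj⟩ := ih.2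
        refine ⟨⟨le_trans ih.1.1 h1.1.1, h1.1.2⟩, ?_⟩
        rcases abs_eq hpos.le |>.mp h1.2 with he | he
        · exact ⟨j + 1, by push_cast; linarith⟩
        · exact ⟨j - 1, by push_cast; linarith⟩
      · rw [ustep' k hk]; exact ih
  -- termination
  have hterm : ∃ k, ¬ (S (u k)).Nonempty := by
    by_contra hall
    push_neg at hall
    have hlt : ∀ k, u k < u (k+1) := by
      intro k
      have h1 := fact1' (u k) (hall k)
      rw [ustep k (hall k)]
      rcases lt_or_eq_of_le h1.1.1 with h2 | h2
      · exact h2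
      · exfalso
        have := h1.2
        rw [← h2] at this
        simp at this
        linarith [this, hpos]
    have hmono : Monotone u := monotone_nat_of_le_succ (fun k => (hlt k).le)
    have hbdd : BddAbove (range u) := ⟨d, by rintro x ⟨k, rfl⟩; exact (hInv k).1.2⟩
    have hconv := tendsto_atTop_ciSup hmono hbdd
    have hcauchy : CauchySeq (fun k => f (u k)) :=
      ((hf.tendsto _).comp hconv).cauchySeq
    obtain ⟨K, hK⟩ := Metric.cauchySeq_iff.mp hcauchy h hpos
    have := hK (K+1) (by omega) K (le_refl K)
    rw [Real.dist_eq] at this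
    have heq : |f (u (K+1)) - f (u K)| = h := by
      rw [ustep K (hall K)]
      exact (fact1' (u K) (hall K)).2
    linarith [heq ▸ this]
  haveI : DecidablePred (fun k => ¬ (S (u k)).Nonempty) := fun _ => Classical.propDecidable _
  set N := Nat.find hterm with hN
  have hNterm : ¬ (S (u N)).Nonempty := Nat.find_spec hterm
  have hNmin : ∀ k, k < N → (S (u k)).Nonempty := by
    intro k hk
    by_contra hc
    have := Nat.find_min' hterm hc
    omega
  -- v
  set v : ℕ → ℤ := fun k => (hInv k).2.choose with hv
  have hvspec : ∀ k, f (u k) = m + h * v k := fun k => (hInv k).2.choose_spec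
  have hvbound : ∀ k, 0 ≤ v k ∧ v k ≤ Q := by
    intro k
    have h1 := hub (u k) (hInv k).1
    have h2 := hlb (u k) (hInv k).1
    rw [hvspec k] at h1 h2
    constructor
    · have : (0:ℝ) ≤ (v k : ℝ) := by
        by_contra hc
        push_neg at hc
        nlinarith
      exact_mod_cast this
    · have : (v k : ℝ) ≤ (Q:ℝ) := by
        by_contra hc
        push_neg at hc
        nlinarith [hhQ]
      exact_mod_cast this
  have hv0 : v 0 = Q := by
    have := hvspec 0
    show v 0 = (Q:ℤ)
    have hu0 : u 0 = c := rfl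
    rw [hu0, hfc] at this
    have : h * (v 0 : ℝ) = h * (Q:ℝ) := by rw [hhQ] at *; linarith
    have := mul_left_cancel₀ (ne_of_gt hpos) this
    exact_mod_cast this
  have hvN : v N = 0 := by
    have h4 := fact4 (u N) (hInv N).1 hNterm d ⟨(hInv N).1.2, le_refl d⟩
    rw [hfd, hvspec N] at h4
    have : |h * (v N:ℝ)| < h := by rw [abs_sub_comm] at h4; convert h4 using 2; ring
    rw [abs_mul, abs_of_pos hpos] at this
    have h5 : |(v N : ℝ)| < 1 := by
      by_contra hc
      push_neg at hc
      nlinarith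
    rw [abs_lt] at h5
    have h6 : (-1:ℝ) < (v N:ℝ) ∧ (v N:ℝ) < 1 := ⟨by linarith [h5.1], h5.2⟩
    have h7 : (-1:ℤ) < v N := by exact_mod_cast h6.1
    have h8 : v N < 1 := by exact_mod_cast h6.2
    omega
  have hN1 : 1 ≤ N := by
    rcases Nat.eq_zero_or_pos N with h0 | h1
    · exfalso
      have := hvN
      rw [h0, hv0] at this
      omega
    · exact h1
  refine ⟨N, u, v, hN1, rfl, fun k _ => (hInv k).1, ?_, fun k _ => hvspec k, hv0, hvN, ?_, fun k _ => hvbound k, ?_, ?_⟩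
  · intro k hk
    rw [ustep k (hNmin k hk)]
    exact (fact1' (u k) (hNmin k hk)).1.1
  · intro k hk
    have h1 := fact1' (u k) (hNmin k hk)
    have heq : |f (u (k+1)) - f (u k)| = h := by rw [ustep k (hNmin k hk)]; exact h1.2
    rw [hvspec (k+1), hvspec k] at heq
    have habs : |h * ((v (k+1) :ℝ) - v k)| = h := by convert heq using 2; ring
    rw [abs_mul, abs_of_pos hpos] at habs
    have h2 : |(v (k+1):ℝ) - v k| = 1 :=
      mul_left_cancel₀ (ne_of_gt hpos) (by linarith : h * |(v (k+1):ℝ) - v k| = h * 1)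
    rcases (abs_eq (by norm_num : (0:ℝ) ≤ 1)).mp h2 with h3 | h3
    · left; exact_mod_cast h3
    · right; exact_mod_cast h3
  · intro k hk t ht
    rw [ustep k (hNmin k hk)] at ht
    exact fact2 (u k) (hNmin k hk) t ht
  · intro t ht
    have h4 := fact4 (u N) (hInv N).1 hNterm t ht
    have : f (u N) = m := by rw [hvspec N, hvN]; simp
    rw [this] at h4
    exact h4.le


namespace DMCT

lemma cnt_even (N M Q k l : ℤ) (v v' : ℤ → ℤ) (hQ : 1 ≤ Q) (hN : 1 ≤ N) (hM : 1 ≤ M)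
    (b1 : 0 ≤ k) (b2 : k ≤ N) (b3 : 0 ≤ l) (b4 : l ≤ M) (b5 : v k = v' l)
    (F1 : k < N → (v (k+1) = v k + 1 ∨ v (k+1) = v k - 1))
    (F2 : k < N → 0 ≤ v (k+1) ∧ v (k+1) ≤ Q)
    (F3 : 0 < k → (v (k + -1) = v k + 1 ∨ v (k + -1) = v k - 1))
    (F4 : 0 < k → 0 ≤ v (k + -1) ∧ v (k + -1) ≤ Q)
    (F5 : k = 0 → v k = Q) (F6 : k = N → v k = 0)
    (G1 : l < M → (v' (l+1) = v' l + 1 ∨ v' (l+1) = v' l - 1))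
    (G2 : l < M → 0 ≤ v' (l+1) ∧ v' (l+1) ≤ Q)
    (G3 : 0 < l → (v' (l + -1) = v' l + 1 ∨ v' (l + -1) = v' l - 1))
    (G4 : 0 < l → 0 ≤ v' (l + -1) ∧ v' (l + -1) ≤ Q)
    (G5 : l = 0 → v' l = Q) (G6 : l = M → v' l = 0)
    (hne0 : ¬ (k = 0 ∧ l = 0)) (hneNM : ¬ (k = N ∧ l = M)) :
    ((if (0 ≤ k + 1 ∧ k + 1 ≤ N ∧ 0 ≤ l + 1 ∧ l + 1 ≤ M ∧ v (k+1) = v' (l+1)) then (1:ℕ) else 0) +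
     ((if (0 ≤ k + 1 ∧ k + 1 ≤ N ∧ 0 ≤ l + -1 ∧ l + -1 ≤ M ∧ v (k+1) = v' (l + -1)) then (1:ℕ) else 0) +
      ((if (0 ≤ k + -1 ∧ k + -1 ≤ N ∧ 0 ≤ l + 1 ∧ l + 1 ≤ M ∧ v (k + -1) = v' (l+1)) then (1:ℕ) else 0) +
       (if (0 ≤ k + -1 ∧ k + -1 ≤ N ∧ 0 ≤ l + -1 ∧ l + -1 ≤ M ∧ v (k + -1) = v' (l + -1)) then (1:ℕ) else 0)))) % 2 = 0 := by
  by_cases hk0 : k = 0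
  · by_cases hl0 : l = 0
    · exact absurd ⟨hk0, hl0⟩ hne0
    · by_cases hlM : l = M
      · exfalso
        have := F5 hk0; have := G6 hlM; omega
      · -- k = 0, l interior
        have e1 : v (k+1) = v k - 1 := by
          have := F1 (by omega); have := F2 (by omega); have := F5 hk0; omega
        have g1 : v' (l+1) = v' l - 1 := by
          have := G1 (by omega); have := G2 (by omega); have := F5 hk0; omega
        have g0 : v' (l + -1) = v' l - 1 := by
          have := G3 (by omega); have := G4 (by omega); have := F5 hk0; omega
        rw [if_pos (by constructor <;> omega), if_pos (by constructor <;> omega),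
            if_neg (by omega), if_neg (by omega)]
  · by_cases hkN : k = N
    · by_cases hlM : l = M
      · exact absurd ⟨hkN, hlM⟩ hneNM
      · by_cases hl0 : l = 0
        · exfalso
          have := F6 hkN; have := G5 hl0; omega
        · -- k = N, l interior
          have e0 : v (k + -1) = v k + 1 := by
            have := F3 (by omega); have := F4 (by omega); have := F6 hkN; omega
          have g1 : v' (l+1) = v' l + 1 := by
            have := G1 (by omega); have := G2 (by omega); have := F6 hkN; omega
          have g0 : v' (l + -1) = v' l + 1 := by
            have := G3 (by omega); have := G4 (by omega); have := F6 hkN; omega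
          rw [if_neg (by omega), if_neg (by omega),
              if_pos (by constructor <;> omega), if_pos (by constructor <;> omega)]
    · by_cases hl0 : l = 0
      · -- l = 0, k interior
        have g1 : v' (l+1) = v' l - 1 := by
          have := G1 (by omega); have := G2 (by omega); have := G5 hl0; omega
        have e1 : v (k+1) = v k - 1 := by
          have := F1 (by omega); have := F2 (by omega); have := G5 hl0; omega
        have e0 : v (k + -1) = v k - 1 := by
          have := F3 (by omega); have := F4 (by omega); have := G5 hl0; omega
        rw [if_pos (by constructor <;> omega), if_neg (by omega),
            if_pos (by constructor <;> omega), if_neg (by omega)]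
      · by_cases hlM : l = M
        · -- l = M, k interior
          have g0 : v' (l + -1) = v' l + 1 := by
            have := G3 (by omega); have := G4 (by omega); have := G6 hlM; omega
          have e1 : v (k+1) = v k + 1 := by
            have := F1 (by omega); have := F2 (by omega); have := G6 hlM; omega
          have e0 : v (k + -1) = v k + 1 := by
            have := F3 (by omega); have := F4 (by omega); have := G6 hlM; omega
          rw [if_neg (by omega), if_pos (by constructor <;> omega),
              if_neg (by omega), if_pos (by constructor <;> omega)]
        · -- interior
          have e1 := F1 (by omega)
          have e0 := F3 (by omega)
          have g1 := G1 (by omega)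
          have g0 := G3 (by omega)
          clear F1 F2 F3 F4 F5 F6 G1 G2 G3 G4 G5 G6 hne0 hneNM
          split_ifs <;> omega

lemma cnt_c0 (N M Q : ℤ) (v v' : ℤ → ℤ) (hQ : 1 ≤ Q) (hN : 1 ≤ N) (hM : 1 ≤ M)
    (hv0 : v 0 = Q) (hv'0 : v' 0 = Q)
    (h1 : v (0+1) - v 0 = 1 ∨ v (0+1) - v 0 = -1) (h2 : 0 ≤ v (0+1) ∧ v (0+1) ≤ Q)
    (h1' : v' (0+1) - v' 0 = 1 ∨ v' (0+1) - v' 0 = -1) (h2' : 0 ≤ v' (0+1) ∧ v' (0+1) ≤ Q) :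
    ((if (0 ≤ (0:ℤ) + 1 ∧ (0:ℤ) + 1 ≤ N ∧ 0 ≤ (0:ℤ) + 1 ∧ (0:ℤ) + 1 ≤ M ∧ v (0+1) = v' (0+1)) then (1:ℕ) else 0) +
     ((if (0 ≤ (0:ℤ) + 1 ∧ (0:ℤ) + 1 ≤ N ∧ 0 ≤ (0:ℤ) + -1 ∧ (0:ℤ) + -1 ≤ M ∧ v (0+1) = v' (0 + -1)) then (1:ℕ) else 0) +
      ((if (0 ≤ (0:ℤ) + -1 ∧ (0:ℤ) + -1 ≤ N ∧ 0 ≤ (0:ℤ) + 1 ∧ (0:ℤ) + 1 ≤ M ∧ v (0 + -1) = v' (0+1)) then (1:ℕ) else 0) +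
       (if (0 ≤ (0:ℤ) + -1 ∧ (0:ℤ) + -1 ≤ N ∧ 0 ≤ (0:ℤ) + -1 ∧ (0:ℤ) + -1 ≤ M ∧ v (0 + -1) = v' (0 + -1)) then (1:ℕ) else 0)))) % 2 = 1 := by
  split_ifs <;> omega

lemma cnt_cNM (N M Q : ℤ) (v v' : ℤ → ℤ) (hQ : 1 ≤ Q) (hN : 1 ≤ N) (hM : 1 ≤ M)
    (hvN : v N = 0) (hv'M : v' M = 0)
    (h1 : v (N + -1) - v N = 1 ∨ v (N + -1) - v N = -1) (h2 : 0 ≤ v (N + -1) ∧ v (N + -1) ≤ Q)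
    (h1' : v' (M + -1) - v' M = 1 ∨ v' (M + -1) - v' M = -1) (h2' : 0 ≤ v' (M + -1) ∧ v' (M + -1) ≤ Q) :
    ((if (0 ≤ N + 1 ∧ N + 1 ≤ N ∧ 0 ≤ M + 1 ∧ M + 1 ≤ M ∧ v (N+1) = v' (M+1)) then (1:ℕ) else 0) +
     ((if (0 ≤ N + 1 ∧ N + 1 ≤ N ∧ 0 ≤ M + -1 ∧ M + -1 ≤ M ∧ v (N+1) = v' (M + -1)) then (1:ℕ) else 0) +
      ((if (0 ≤ N + -1 ∧ N + -1 ≤ N ∧ 0 ≤ M + 1 ∧ M + 1 ≤ M ∧ v (N + -1) = v' (M+1)) then (1:ℕ) else 0) +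
       (if (0 ≤ N + -1 ∧ N + -1 ≤ N ∧ 0 ≤ M + -1 ∧ M + -1 ≤ M ∧ v (N + -1) = v' (M + -1)) then (1:ℕ) else 0)))) % 2 = 1 := by
  split_ifs <;> omega


def Ok (N M : ℤ) (v v' : ℤ → ℤ) (x : ℤ × ℤ) : Prop :=
  0 ≤ x.1 ∧ x.1 ≤ N ∧ 0 ≤ x.2 ∧ x.2 ≤ M ∧ v x.1 = v' x.2

def Adj (N M : ℤ) (v v' : ℤ → ℤ) (x y : ℤ × ℤ) : Prop :=
  Ok N M v v' x ∧ Ok N M v v' y ∧ (y.1 = x.1 + 1 ∨ y.1 = x.1 - 1) ∧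
    (y.2 = x.2 + 1 ∨ y.2 = x.2 - 1)

theorem adj_symm {N M v v'} {x y : ℤ × ℤ} (h : Adj N M v v' x y) : Adj N M v v' y x := by
  obtain ⟨h1, h2, h3, h4⟩ := h
  exact ⟨h2, h1, by omega, by omega⟩

def lexlt (x y : ℤ × ℤ) : Prop := x.1 < y.1 ∨ (x.1 = y.1 ∧ x.2 < y.2)

theorem lexlt_tri {x y : ℤ × ℤ} (hxy : x ≠ y) : lexlt x y ∨ lexlt y x := by
  unfold lexlt
  by_contra hc
  push_neg at hc
  exact hxy (Prod.ext_iff.mpr ⟨by omega, by omega⟩)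

theorem lexlt_notboth {x y : ℤ × ℤ} (h1 : lexlt x y) (h2 : lexlt y x) : False := by
  unfold lexlt at h1 h2
  omega

theorem adj_irrefl {N M v v'} {x : ℤ × ℤ} (h : Adj N M v v' x x) : False := by
  obtain ⟨-, -, h3, -⟩ := h; omega

theorem reach (N M Q : ℤ) (v v' : ℤ → ℤ) (hN : 1 ≤ N) (hM : 1 ≤ M) (hQ : 1 ≤ Q)
    (hv0 : v 0 = Q) (hvN : v N = 0) (hv'0 : v' 0 = Q) (hv'M : v' M = 0)
    (hstep : ∀ k, 0 ≤ k → k < N → v (k+1) - v k = 1 ∨ v (k+1) - v k = -1)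
    (hstep' : ∀ l, 0 ≤ l → l < M → v' (l+1) - v' l = 1 ∨ v' (l+1) - v' l = -1)
    (hbd : ∀ k, 0 ≤ k → k ≤ N → 0 ≤ v k ∧ v k ≤ Q)
    (hbd' : ∀ l, 0 ≤ l → l ≤ M → 0 ≤ v' l ∧ v' l ≤ Q) :
    Relation.ReflTransGen (Adj N M v v') (0,0) (N,M) := by
  classical
  set A := Adj N M v v' with hA
  have Asymm : ∀ {x y}, A x y → A y x := fun h => adj_symm h
  set V : Finset (ℤ × ℤ) := (Finset.Icc 0 N) ×ˢ (Finset.Icc 0 M) with hV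
  have memV : ∀ {x : ℤ × ℤ}, Ok N M v v' x → x ∈ V := by
    intro x hx
    simp only [hV, Finset.mem_product, Finset.mem_Icc]
    exact ⟨⟨hx.1, hx.2.1⟩, ⟨hx.2.2.1, hx.2.2.2.1⟩⟩
  set R : ℤ × ℤ → Prop := Relation.ReflTransGen A (0,0) with hR
  set C : Finset (ℤ × ℤ) := V.filter R with hC
  have ok00 : Ok N M v v' (0,0) := by
    refine ⟨by omega, by omega, by omega, by omega, ?_⟩
    show v 0 = v' 0
    rw [hv0, hv'0]
  have okNM : Ok N M v v' (N,M) := by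
    refine ⟨by omega, by omega, by omega, by omega, ?_⟩
    show v N = v' M
    rw [hvN, hv'M]
  have mem00 : (0,0) ∈ C := by
    rw [hC, Finset.mem_filter]
    exact ⟨memV ok00, Relation.ReflTransGen.refl⟩
  have okR : ∀ {x}, R x → x = (0,0) ∨ Ok N M v v' x := by
    intro x hx
    rcases Relation.ReflTransGen.cases_tail hx with h | ⟨y, -, hyx⟩
    · left; exact h
    · right; exact hyx.2.1
  have closure : ∀ {x y}, x ∈ C → A x y → y ∈ C := by
    intro x y hx hxy
    rw [hC, Finset.mem_filter] at hx ⊢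
    exact ⟨memV hxy.2.1, hx.2.tail hxy⟩
  -- degree representation
  have deg_repr : ∀ x : ℤ × ℤ, x ∈ C →
      (C.filter (A x)).card =
        ((if A x (x + (1,1)) then 1 else 0) + ((if A x (x + (1,-1)) then 1 else 0) +
         ((if A x (x + (-1,1)) then 1 else 0) + (if A x (x + (-1,-1)) then 1 else 0)))) := by
    intro x hxC
    have hfil : C.filter (A x) =
        ({x + (1,1), x + (1,-1), x + (-1,1), x + (-1,-1)} : Finset (ℤ × ℤ)).filter (A x) := by
      apply Finset.ext
      intro y
      simp only [Finset.mem_filter, Finset.mem_insert, Finset.mem_singleton]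
      constructor
      · rintro ⟨-, hy⟩
        refine ⟨?_, hy⟩
        have h3 := hy.2.2.1
        have h4 := hy.2.2.2
        have : (y.1 = x.1 + 1 ∨ y.1 = x.1 - 1) ∧ (y.2 = x.2 + 1 ∨ y.2 = x.2 - 1) := ⟨h3, h4⟩
        rcases this.1 with e1 | e1 <;> rcases this.2 with e2 | e2
        · left; ext <;> simp only [Prod.fst_add, Prod.snd_add] <;> omega
        · right; left; ext <;> simp only [Prod.fst_add, Prod.snd_add] <;> omega
        · right; right; left; ext <;> simp only [Prod.fst_add, Prod.snd_add] <;> omega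
        · right; right; right; ext <;> simp only [Prod.fst_add, Prod.snd_add] <;> omega
      · rintro ⟨-, hy⟩
        exact ⟨closure hxC hy, hy⟩
    rw [hfil]
    have d1 : x + ((1:ℤ),(1:ℤ)) ∉ ({x + (1,-1), x + (-1,1), x + (-1,-1)} : Finset (ℤ × ℤ)) := by
      simp only [Finset.mem_insert, Finset.mem_singleton, Prod.ext_iff, Prod.fst_add, Prod.snd_add]
      omega
    have d2 : x + ((1:ℤ),(-1:ℤ)) ∉ ({x + (-1,1), x + (-1,-1)} : Finset (ℤ × ℤ)) := by
      simp only [Finset.mem_insert, Finset.mem_singleton, Prod.ext_iff, Prod.fst_add, Prod.snd_add]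
      omega
    have d3 : x + ((-1:ℤ),(1:ℤ)) ∉ ({x + (-1,-1)} : Finset (ℤ × ℤ)) := by
      simp only [Finset.mem_singleton, Prod.ext_iff, Prod.fst_add, Prod.snd_add]
      omega
    rw [Finset.card_filter]
    rw [show ({x + (1,1), x + (1,-1), x + (-1,1), x + (-1,-1)} : Finset (ℤ × ℤ)) =
      insert (x + (1,1)) (insert (x + (1,-1)) (insert (x + (-1,1)) {x + (-1,-1)})) from rfl]
    rw [Finset.sum_insert d1, Finset.sum_insert d2, Finset.sum_insert d3, Finset.sum_singleton]
  -- adjacency characterization in direction e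
  have adj_add_iff : ∀ (x : ℤ × ℤ), Ok N M v v' x → ∀ e : ℤ × ℤ,
      ((e.1 = 1 ∨ e.1 = -1) ∧ (e.2 = 1 ∨ e.2 = -1)) →
      (A x (x + e) ↔ (0 ≤ x.1 + e.1 ∧ x.1 + e.1 ≤ N ∧ 0 ≤ x.2 + e.2 ∧ x.2 + e.2 ≤ M ∧
        v (x.1 + e.1) = v' (x.2 + e.2))) := by
    intro x hx e he
    constructor
    · intro h
      obtain ⟨a1, a2, a3, a4, a5⟩ := h.2.1
      simp only [Prod.fst_add, Prod.snd_add] at a1 a2 a3 a4 a5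
      exact ⟨a1, a2, a3, a4, a5⟩
    · intro h
      refine ⟨hx, ?_, ?_, ?_⟩
      · refine ⟨?_, ?_, ?_, ?_, ?_⟩ <;> simp only [Prod.fst_add, Prod.snd_add] <;> tauto
      · simp only [Prod.fst_add]; omega
      · simp only [Prod.snd_add]; omega
  -- parity of degrees away from corners
  have deg_even : ∀ x : ℤ × ℤ, x ∈ C → Ok N M v v' x → x ≠ (0,0) → x ≠ (N,M) →
      (C.filter (A x)).card % 2 = 0 := by
    intro x hxC hx hx0 hxNM
    obtain ⟨k, l⟩ := x
    obtain ⟨b1, b2, b3, b4, b5⟩ := hx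
    simp only at b1 b2 b3 b4 b5
    have hxk : Ok N M v v' (k,l) := ⟨b1, b2, b3, b4, b5⟩
    have J1 : A (k,l) ((k,l) + (1,1)) ↔
        (0 ≤ k + 1 ∧ k + 1 ≤ N ∧ 0 ≤ l + 1 ∧ l + 1 ≤ M ∧ v (k+1) = v' (l+1)) :=
      adj_add_iff (k,l) hxk (1,1) (by norm_num)
    have J2 : A (k,l) ((k,l) + (1,-1)) ↔
        (0 ≤ k + 1 ∧ k + 1 ≤ N ∧ 0 ≤ l + -1 ∧ l + -1 ≤ M ∧ v (k+1) = v' (l + -1)) :=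
      adj_add_iff (k,l) hxk (1,-1) (by norm_num)
    have J3 : A (k,l) ((k,l) + (-1,1)) ↔
        (0 ≤ k + -1 ∧ k + -1 ≤ N ∧ 0 ≤ l + 1 ∧ l + 1 ≤ M ∧ v (k + -1) = v' (l+1)) :=
      adj_add_iff (k,l) hxk (-1,1) (by norm_num)
    have J4 : A (k,l) ((k,l) + (-1,-1)) ↔
        (0 ≤ k + -1 ∧ k + -1 ≤ N ∧ 0 ≤ l + -1 ∧ l + -1 ≤ M ∧ v (k + -1) = v' (l + -1)) :=
      adj_add_iff (k,l) hxk (-1,-1) (by norm_num)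
    rw [deg_repr (k,l) hxC]
    simp only [J1, J2, J3, J4]
    refine cnt_even N M Q k l v v' hQ hN hM b1 b2 b3 b4 b5 ?_ ?_ ?_ ?_ ?_ ?_ ?_ ?_ ?_ ?_ ?_ ?_ ?_ ?_
    · intro h; have := hstep k b1 h; omega
    · exact fun h => hbd (k+1) (by omega) (by omega)
    · intro h
      have h2 := hstep (k + -1) (by omega) (by omega)
      rw [show k + -1 + 1 = k by ring] at h2
      omega
    · exact fun h => hbd (k + -1) (by omega) (by omega)
    · exact fun h => by rw [h, hv0]
    · exact fun h => by rw [h, hvN]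
    · intro h; have := hstep' l b3 h; omega
    · exact fun h => hbd' (l+1) (by omega) (by omega)
    · intro h
      have h2 := hstep' (l + -1) (by omega) (by omega)
      rw [show l + -1 + 1 = l by ring] at h2
      omega
    · exact fun h => hbd' (l + -1) (by omega) (by omega)
    · exact fun h => by rw [h, hv'0]
    · exact fun h => by rw [h, hv'M]
    · rintro ⟨rfl, rfl⟩; exact hx0 rfl
    · rintro ⟨rfl, rfl⟩; exact hxNM rfl
  -- corner degrees
  have deg00 : (C.filter (A (0,0))).card % 2 = 1 := by
    have J1 : A (0,0) ((0,0) + (1,1)) ↔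
        (0 ≤ (0:ℤ) + 1 ∧ (0:ℤ) + 1 ≤ N ∧ 0 ≤ (0:ℤ) + 1 ∧ (0:ℤ) + 1 ≤ M ∧ v (0+1) = v' (0+1)) :=
      adj_add_iff (0,0) ok00 (1,1) (by norm_num)
    have J2 : A (0,0) ((0,0) + (1,-1)) ↔
        (0 ≤ (0:ℤ) + 1 ∧ (0:ℤ) + 1 ≤ N ∧ 0 ≤ (0:ℤ) + -1 ∧ (0:ℤ) + -1 ≤ M ∧ v (0+1) = v' (0 + -1)) :=
      adj_add_iff (0,0) ok00 (1,-1) (by norm_num)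
    have J3 : A (0,0) ((0,0) + (-1,1)) ↔
        (0 ≤ (0:ℤ) + -1 ∧ (0:ℤ) + -1 ≤ N ∧ 0 ≤ (0:ℤ) + 1 ∧ (0:ℤ) + 1 ≤ M ∧ v (0 + -1) = v' (0+1)) :=
      adj_add_iff (0,0) ok00 (-1,1) (by norm_num)
    have J4 : A (0,0) ((0,0) + (-1,-1)) ↔
        (0 ≤ (0:ℤ) + -1 ∧ (0:ℤ) + -1 ≤ N ∧ 0 ≤ (0:ℤ) + -1 ∧ (0:ℤ) + -1 ≤ M ∧ v (0 + -1) = v' (0 + -1)) :=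
      adj_add_iff (0,0) ok00 (-1,-1) (by norm_num)
    rw [deg_repr (0,0) mem00]
    simp only [J1, J2, J3, J4]
    exact cnt_c0 N M Q v v' hQ hN hM hv0 hv'0
      (hstep 0 (le_refl 0) (by omega)) (hbd (0+1) (by omega) (by omega))
      (hstep' 0 (le_refl 0) (by omega)) (hbd' (0+1) (by omega) (by omega))
  have degNM : ∀ hmem : (N,M) ∈ C, (C.filter (A (N,M))).card % 2 = 1 := by
    intro hmem
    have J1 : A (N,M) ((N,M) + (1,1)) ↔
        (0 ≤ N + 1 ∧ N + 1 ≤ N ∧ 0 ≤ M + 1 ∧ M + 1 ≤ M ∧ v (N+1) = v' (M+1)) :=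
      adj_add_iff (N,M) okNM (1,1) (by norm_num)
    have J2 : A (N,M) ((N,M) + (1,-1)) ↔
        (0 ≤ N + 1 ∧ N + 1 ≤ N ∧ 0 ≤ M + -1 ∧ M + -1 ≤ M ∧ v (N+1) = v' (M + -1)) :=
      adj_add_iff (N,M) okNM (1,-1) (by norm_num)
    have J3 : A (N,M) ((N,M) + (-1,1)) ↔
        (0 ≤ N + -1 ∧ N + -1 ≤ N ∧ 0 ≤ M + 1 ∧ M + 1 ≤ M ∧ v (N + -1) = v' (M+1)) :=
      adj_add_iff (N,M) okNM (-1,1) (by norm_num)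
    have J4 : A (N,M) ((N,M) + (-1,-1)) ↔
        (0 ≤ N + -1 ∧ N + -1 ≤ N ∧ 0 ≤ M + -1 ∧ M + -1 ≤ M ∧ v (N + -1) = v' (M + -1)) :=
      adj_add_iff (N,M) okNM (-1,-1) (by norm_num)
    have h1 := hstep (N + -1) (by omega) (by omega)
    rw [show N + -1 + 1 = N by ring] at h1
    have h1' := hstep' (M + -1) (by omega) (by omega)
    rw [show M + -1 + 1 = M by ring] at h1'
    rw [deg_repr (N,M) hmem]
    simp only [J1, J2, J3, J4]
    exact cnt_cNM N M Q v v' hQ hN hM hvN hv'M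
      (by omega) (hbd (N + -1) (by omega) (by omega))
      (by omega) (hbd' (M + -1) (by omega) (by omega))
  -- handshake: total degree is even
  have Airr : ∀ x : ℤ×ℤ, ¬ A x x := fun x h => adj_irrefl h
  have pointwise : ∀ x y : ℤ×ℤ,
      (if A x y then (1:ℕ) else 0) =
        (if A x y ∧ lexlt x y then (1:ℕ) else 0) + (if A x y ∧ lexlt y x then (1:ℕ) else 0) := by
    intro x y
    by_cases hA : A x y
    · have hxy : x ≠ y := fun h => Airr x (h ▸ hA)
      rcases lexlt_tri hxy with h | h
      · rw [if_pos hA, if_pos ⟨hA, h⟩, if_neg (fun hc => lexlt_notboth h hc.2)]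
      · rw [if_pos hA, if_neg (fun hc => lexlt_notboth hc.2 h), if_pos ⟨hA, h⟩]
    · rw [if_neg hA, if_neg (fun hc => hA hc.1), if_neg (fun hc => hA hc.1)]
  have Teven : (∑ x ∈ C, (C.filter (A x)).card) % 2 = 0 := by
    have e1 : (∑ x ∈ C, (C.filter (A x)).card) =
        ∑ x ∈ C, ∑ y ∈ C, (if A x y then (1:ℕ) else 0) := by
      apply Finset.sum_congr rfl
      intro x _
      exact Finset.card_filter _ _
    have e2 : (∑ x ∈ C, ∑ y ∈ C, (if A x y then (1:ℕ) else 0)) =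
        (∑ x ∈ C, ∑ y ∈ C, (if A x y ∧ lexlt x y then (1:ℕ) else 0)) +
        (∑ x ∈ C, ∑ y ∈ C, (if A x y ∧ lexlt y x then (1:ℕ) else 0)) := by
      rw [← Finset.sum_add_distrib]
      apply Finset.sum_congr rfl
      intro x _
      rw [← Finset.sum_add_distrib]
      apply Finset.sum_congr rfl
      intro y _
      exact pointwise x y
    have e3 : (∑ x ∈ C, ∑ y ∈ C, (if A x y ∧ lexlt y x then (1:ℕ) else 0)) =
        (∑ x ∈ C, ∑ y ∈ C, (if A x y ∧ lexlt x y then (1:ℕ) else 0)) := by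
      rw [Finset.sum_comm]
      apply Finset.sum_congr rfl
      intro y _
      apply Finset.sum_congr rfl
      intro x _
      congr 1
      apply propext
      constructor
      · rintro ⟨h1, h2⟩; exact ⟨Asymm h1, h2⟩
      · rintro ⟨h1, h2⟩; exact ⟨Asymm h1, h2⟩
    rw [e1, e2, e3]
    omega
  -- conclusion
  by_contra hNM
  have hNMC : (N,M) ∉ C := by
    intro h
    rw [hC, Finset.mem_filter] at h
    exact hNM h.2
  have split : (∑ x ∈ C, (C.filter (A x)).card) =
      (C.filter (A (0,0))).card + ∑ x ∈ C.erase (0,0), (C.filter (A x)).card :=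
    (Finset.add_sum_erase C _ mem00).symm
  have rest_even : (∑ x ∈ C.erase (0,0), (C.filter (A x)).card) % 2 = 0 := by
    rw [Finset.sum_nat_mod]
    have : ∀ x ∈ C.erase (0,0), (C.filter (A x)).card % 2 = 0 := by
      intro x hx
      have hxC : x ∈ C := Finset.mem_of_mem_erase hx
      have hx0 : x ≠ (0,0) := Finset.ne_of_mem_erase hx
      have hxNM : x ≠ (N,M) := fun h => hNMC (h ▸ hxC)
      have hR : R x := (Finset.mem_filter.mp hxC).2
      rcases okR hR with h | h
      · exact absurd h hx0
      · exact deg_even x hxC h hx0 hxNM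
    rw [Finset.sum_congr rfl this]
    simp
  omega

end DMCT


lemma affine_mem_uIcc {x y σ : ℝ} (hσ : σ ∈ Icc (0:ℝ) 1) : x + σ * (y - x) ∈ uIcc x y := by
  rcases le_total x y with h | h
  · rw [uIcc_of_le h]
    constructor
    · nlinarith [hσ.1, hσ.2]
    · nlinarith [hσ.1, hσ.2]
  · rw [uIcc_of_ge h]
    constructor
    · nlinarith [hσ.1, hσ.2]
    · nlinarith [hσ.1, hσ.2]

lemma iter_monodromy (f : ℝ → ℝ) (c : ℝ) (hf : ∀ t, f (t + 1) = f t + c) :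
    ∀ (j : ℤ) (t : ℝ), f (t + j) = f t + j * c := by
  intro j
  induction j using Int.induction_on with
  | zero => intro t; simp
  | succ k ih =>
    intro t
    have h1 : (t : ℝ) + ((k : ℤ) + 1 : ℤ) = (t + (k:ℤ)) + 1 := by push_cast; ring
    rw [h1, hf, ih]
    push_cast; ring
  | pred k ih =>
    intro t
    have h1 := hf (t + (-(k:ℤ) - 1 : ℤ))
    have h2 : (t + ((-(k:ℤ) - 1 : ℤ)):ℝ) + 1 = t + ((-(k:ℤ)):ℤ) := by push_cast; ring
    rw [h2, ih] at h1
    have h3 : f (t + ((-(k:ℤ) - 1):ℤ)) = f t + (-(k:ℤ)) * c - c := by push_cast at h1 ⊢; linarith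
    rw [h3]
    push_cast; ring

lemma seg_cross (Φ Λ : ℝ → ℝ) (hΦ : Continuous Φ) {a b : ℝ} (hab1 : a ≤ b) (hb1 : b ≤ a + 1)
    {s₀ s₁ t₀ t₁ w h : ℝ} (hh : 0 ≤ h)
    (hs₀ : s₀ ∈ Icc a b) (hs₁ : s₁ ∈ Icc a b) (ht₀ : t₀ ∈ Icc b (a+1)) (ht₁ : t₁ ∈ Icc b (a+1))
    (hws : ∀ s ∈ uIcc s₀ s₁, |Λ s - w| ≤ 2*h) (hwt : ∀ t ∈ uIcc t₀ t₁, |Λ t - w| ≤ 2*h)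
    (hc0 : 1 ≤ Φ t₀ - Φ s₀) (hc1 : Φ t₁ - Φ s₁ < 1) :
    ∃ s t : ℝ, s ∈ Icc a b ∧ t ∈ Icc b (a+1) ∧ Φ t - Φ s = 1 ∧ |Λ s - Λ t| ≤ 4*h := by
  set χ : ℝ → ℝ := fun σ => Φ (t₀ + σ * (t₁ - t₀)) - Φ (s₀ + σ * (s₁ - s₀)) with hχ
  have hχc : Continuous χ := by
    apply Continuous.sub
    · exact hΦ.comp (continuous_const.add (continuous_id.mul continuous_const))
    · exact hΦ.comp (continuous_const.add (continuous_id.mul continuous_const))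
  have hχ0 : χ 0 = Φ t₀ - Φ s₀ := by
    rw [hχ]; simp
  have hχ1 : χ 1 = Φ t₁ - Φ s₁ := by
    rw [hχ]
    simp only [one_mul]
    rw [show t₀ + (t₁ - t₀) = t₁ by ring, show s₀ + (s₁ - s₀) = s₁ by ring]
  obtain ⟨σ, hσ, hχσ⟩ := intermediate_value_Icc' (by norm_num : (0:ℝ) ≤ 1) hχc.continuousOn
    (⟨by rw [hχ1]; exact hc1.le, by rw [hχ0]; exact hc0⟩ : (1:ℝ) ∈ Icc (χ 1) (χ 0))
  have hsmem : s₀ + σ * (s₁ - s₀) ∈ uIcc s₀ s₁ := affine_mem_uIcc hσ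
  have htmem : t₀ + σ * (t₁ - t₀) ∈ uIcc t₀ t₁ := affine_mem_uIcc hσ
  have hsub1 : uIcc s₀ s₁ ⊆ Icc a b := by
    rw [← Set.uIcc_of_le hab1]
    exact Set.uIcc_subset_uIcc (by rw [Set.uIcc_of_le hab1]; exact hs₀)
      (by rw [Set.uIcc_of_le hab1]; exact hs₁)
  have hsub2 : uIcc t₀ t₁ ⊆ Icc b (a+1) := by
    rw [← Set.uIcc_of_le hb1]
    exact Set.uIcc_subset_uIcc (by rw [Set.uIcc_of_le hb1]; exact ht₀)
      (by rw [Set.uIcc_of_le hb1]; exact ht₁)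
  refine ⟨s₀ + σ * (s₁ - s₀), t₀ + σ * (t₁ - t₀), hsub1 hsmem, hsub2 htmem, hχσ, ?_⟩
  have h1 := hws _ hsmem
  have h2 := hwt _ htmem
  calc |Λ (s₀ + σ * (s₁ - s₀)) - Λ (t₀ + σ * (t₁ - t₀))|
      ≤ |Λ (s₀ + σ * (s₁ - s₀)) - w| + |w - Λ (t₀ + σ * (t₁ - t₀))| := abs_sub_le _ _ _
    _ ≤ 2*h + 2*h := by
        rw [abs_sub_comm w]
        exact add_le_add h1 h2
    _ = 4*h := by ring

theorem exists_unit_jump (Φ Λ : ℝ → ℝ) (hΦ : Continuous Φ) (hΛ : Continuous Λ)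
    (g : ℤ) (hg : 1 ≤ g) (hΦ1 : ∀ t, Φ (t+1) = Φ t + g) (hΛ1 : ∀ t, Λ (t+1) = Λ t) :
    ∃ s t : ℝ, Λ s = Λ t ∧ Φ t - Φ s = 1 := by
  have hΛint : ∀ (j : ℤ) (t : ℝ), Λ (t + j) = Λ t := by
    intro j t
    have := iter_monodromy Λ 0 (by intro t; rw [hΛ1 t]; ring) j t
    simpa using this
  obtain ⟨a, ha01, hamax⟩ := isCompact_Icc.exists_isMaxOn
    (Set.nonempty_Icc.mpr (by norm_num : (0:ℝ) ≤ 1)) hΛ.continuousOn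
  have hglobal : ∀ t : ℝ, Λ t ≤ Λ a := by
    intro t
    have h1 : Λ t = Λ (Int.fract t) := by
      have h2 : Int.fract t + (⌊t⌋ : ℤ) = t := by rw [Int.fract]; ring
      have h3 := hΛint ⌊t⌋ (Int.fract t)
      rw [h2] at h3
      rw [← h3]
    rw [h1]
    exact hamax ⟨Int.fract_nonneg t, (Int.fract_lt_one t).le⟩
  obtain ⟨b, hb, hbmin⟩ := isCompact_Icc.exists_isMinOn
    (Set.nonempty_Icc.mpr (by linarith : a ≤ a + 1)) hΛ.continuousOn
  set M := Λ a with hM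
  set m := Λ b with hm
  have hΛa1 : Λ (a+1) = M := hΛ1 a
  have hgR : (1:ℝ) ≤ (g:ℝ) := by exact_mod_cast hg
  by_cases hmM : m < M
  case neg =>
    -- essentially constant case
    have hconst : M ≤ m := not_lt.mp hmM
    obtain ⟨t1, ht1, hΦt1⟩ := intermediate_value_Icc (by linarith : a ≤ a + 1) hΦ.continuousOn
      (⟨by linarith, by rw [hΦ1 a]; linarith⟩ : Φ a + 1 ∈ Icc (Φ a) (Φ (a+1)))
    refine ⟨a, t1, ?_, by linarith [hΦt1]⟩
    have h1 : Λ t1 ≤ M := hglobal t1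
    have h2 : m ≤ Λ t1 := hbmin ht1
    show Λ a = Λ t1
    rw [← hM]
    linarith
  case pos =>
  have hab1 : a < b := by
    rcases eq_or_lt_of_le hb.1 with h | h
    · exfalso; rw [hm, ← h] at hmM; exact lt_irrefl _ hmM
    · exact h
  have hab2 : b < a + 1 := by
    rcases eq_or_lt_of_le hb.2 with h | h
    · exfalso; rw [hm, h, hΛa1] at hmM; exact lt_irrefl _ hmM
    · exact h
  -- main quantitative step
  have keyQ : ∀ Q : ℕ, 1 ≤ Q → ∃ s t : ℝ, s ∈ Icc a b ∧ t ∈ Icc b (a+1) ∧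
      Φ t - Φ s = 1 ∧ |Λ s - Λ t| ≤ 4 * ((M - m)/(Q:ℝ)) := by
    intro Q hQ
    set h := (M - m)/(Q:ℝ) with hh
    have hQR : (0:ℝ) < Q := by
      have : 0 < Q := hQ
      exact_mod_cast this
    have hhpos : 0 < h := by
      rw [hh]
      apply div_pos (by linarith) hQR
    obtain ⟨N1, u, v, hN1, hu0, humem, hord, hval, hv0, hvN, hvstep, hvbd, hseg, hterm⟩ :=
      staircase Λ hΛ hab1 rfl rfl (fun t _ => hglobal t)
        (fun t ht => hbmin ⟨ht.1, le_trans ht.2 (by linarith)⟩) hQ rfl hmM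
    set f2 : ℝ → ℝ := fun x => Λ (a + 1 + b - x) with hf2
    have hf2c : Continuous f2 := hΛ.comp (continuous_const.sub continuous_id)
    obtain ⟨N2, w2, v2, hN2, hw0, hwmem, hword, hwval, hv20, hv2N, hv2step, hv2bd, hwseg, hwterm⟩ :=
      staircase f2 hf2c hab2
        (show f2 b = M by show Λ (a+1+b-b) = M; rw [show a+1+b-b = a+1 by ring]; exact hΛa1)
        (show f2 (a+1) = m by show Λ (a+1+b-(a+1)) = m; rw [show a+1+b-(a+1) = b by ring])
        (fun x _ => hglobal _)
        (fun x hx => hbmin ⟨by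
          show a ≤ a+1+b-x
          have := hx.2; linarith, by
          show a+1+b-x ≤ a+1
          have := hx.1; linarith⟩)
        hQ rfl hmM
    -- reflected staircase in original coordinates
    set tu : ℕ → ℝ := fun l => a + 1 + b - w2 l with htu
    have htu0 : tu 0 = a + 1 := by rw [htu]; simp only; rw [hw0]; ring
    have htumem : ∀ l, l ≤ N2 → tu l ∈ Icc b (a+1) := by
      intro l hl
      have := hwmem l hl
      exact ⟨by show b ≤ a+1+b-w2 l; have := this.2; linarith,
             by show a+1+b-w2 l ≤ a+1; have := this.1; linarith⟩
    have htuval : ∀ l, l ≤ N2 → Λ (tu l) = m + h * v2 l := fun l hl => hwval l hl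
    have htuseg : ∀ l, l < N2 → ∀ t_ ∈ uIcc (tu l) (tu (l+1)), |Λ t_ - Λ (tu l)| ≤ h := by
      intro l hl t_ ht_
      have hord' := hword l hl
      have hx1 : a+1+b-t_ ∈ Icc (w2 l) (w2 (l+1)) := by
        rw [Set.mem_uIcc] at ht_
        have e1 : tu l = a+1+b - w2 l := rfl
        have e2 : tu (l+1) = a+1+b - w2 (l+1) := rfl
        rw [e1, e2] at ht_
        constructor <;> rcases ht_ with h1 | h1 <;> linarith [h1.1, h1.2, hord']
      have hb1 := hwseg l hl (a+1+b-t_) hx1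
      have e : a+1+b-(a+1+b-t_) = t_ := by ring
      have e2 : f2 (a+1+b-t_) = Λ t_ := congrArg Λ e
      rw [e2] at hb1
      exact hb1
    have htuterm : ∀ t_ ∈ Icc b (tu N2), |Λ t_ - m| ≤ h := by
      intro t_ ht_
      have hx1 : a+1+b-t_ ∈ Icc (w2 N2) (a+1) := by
        constructor
        · have := ht_.2; show w2 N2 ≤ a+1+b-t_; simp only [htu] at this; linarith
        · have := ht_.1; show a+1+b-t_ ≤ a+1; linarith
      have hb1 := hwterm (a+1+b-t_) hx1
      have e : a+1+b-(a+1+b-t_) = t_ := by ring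
      have e2 : f2 (a+1+b-t_) = Λ t_ := congrArg Λ e
      rw [e2] at hb1
      exact hb1
    -- integer staircases
    set vz : ℤ → ℤ := fun k => v k.toNat with hvz
    set vz' : ℤ → ℤ := fun l => v2 l.toNat with hvz'
    have hreach : Relation.ReflTransGen (DMCT.Adj (N1:ℤ) (N2:ℤ) vz vz') (0,0) ((N1:ℤ),(N2:ℤ)) := by
      apply DMCT.reach (N1:ℤ) (N2:ℤ) (Q:ℤ) vz vz'
        (by exact_mod_cast hN1) (by exact_mod_cast hN2) (by exact_mod_cast hQ)
      · show v (0:ℤ).toNat = Q; exact hv0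
      · show v ((N1:ℤ)).toNat = 0
        rw [show ((N1:ℤ)).toNat = N1 from rfl]
        exact hvN
      · show v2 (0:ℤ).toNat = Q; exact hv20
      · show v2 ((N2:ℤ)).toNat = 0
        rw [show ((N2:ℤ)).toNat = N2 from rfl]
        exact hv2N
      · intro k hk0 hkN
        show vz (k+1) - vz k = 1 ∨ vz (k+1) - vz k = -1
        have h1 : (k+1).toNat = k.toNat + 1 := by omega
        show v (k+1).toNat - v k.toNat = 1 ∨ v (k+1).toNat - v k.toNat = -1
        rw [h1]
        exact hvstep k.toNat (by omega)
      · intro l hl0 hlN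
        show vz' (l+1) - vz' l = 1 ∨ vz' (l+1) - vz' l = -1
        have h1 : (l+1).toNat = l.toNat + 1 := by omega
        show v2 (l+1).toNat - v2 l.toNat = 1 ∨ v2 (l+1).toNat - v2 l.toNat = -1
        rw [h1]
        exact hv2step l.toNat (by omega)
      · intro k hk0 hkN
        exact hvbd k.toNat (by omega)
      · intro l hl0 hlN
        exact hv2bd l.toNat (by omega)
    -- walk extraction
    set su : ℤ → ℝ := fun k => u k.toNat with hsu
    set tuz : ℤ → ℝ := fun l => tu l.toNat with htuz
    -- side bounds
    have sideA : ∀ k k' : ℤ, 0 ≤ k → k ≤ (N1:ℤ) → 0 ≤ k' → k' ≤ (N1:ℤ) →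
        (k' = k + 1 ∨ k' = k - 1) →
        ∀ s ∈ uIcc (su k) (su k'), |Λ s - Λ (su k)| ≤ 2 * h := by
      intro k k' hk0 hkN hk'0 hk'N hd s hs
      rcases hd with rfl | rfl
      · have hkn : (k+1).toNat = k.toNat + 1 := by omega
        have hklt : k.toNat < N1 := by omega
        have he : uIcc (su k) (su (k+1)) = Icc (u k.toNat) (u (k.toNat + 1)) := by
          show uIcc (u k.toNat) (u (k+1).toNat) = _
          rw [hkn, Set.uIcc_of_le (hord _ hklt)]
        rw [he] at hs
        have hb1 := hseg k.toNat hklt s hs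
        calc |Λ s - Λ (su k)| = |Λ s - Λ (u k.toNat)| := rfl
          _ ≤ h := hb1
          _ ≤ 2*h := by linarith
      · have hk1 : 1 ≤ k := by omega
        obtain ⟨j, hj⟩ : ∃ j : ℕ, k.toNat = j + 1 := ⟨k.toNat - 1, by omega⟩
        have hjN : j < N1 := by omega
        have hkm : (k - 1).toNat = j := by omega
        have he : uIcc (su k) (su (k-1)) = Icc (u j) (u (j+1)) := by
          show uIcc (u k.toNat) (u (k-1).toNat) = _
          rw [hkm, hj, Set.uIcc_comm, Set.uIcc_of_le (hord j hjN)]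
        rw [he] at hs
        have hb1 := hseg j hjN s hs
        have hb2 : |Λ (u j) - Λ (u (j+1))| ≤ h := by
          rw [hval j (by omega), hval (j+1) (by omega)]
          rcases hvstep j hjN with hst | hst
          · have hst' : ((v (j+1)):ℝ) = (v j : ℝ) + 1 := by exact_mod_cast (by omega : v (j+1) = v j + 1)
            rw [hst']
            rw [show m + h*(v j:ℝ) - (m + h*((v j:ℝ)+1)) = -h by ring]
            rw [abs_neg, abs_of_pos hhpos]
          · have hst' : ((v (j+1)):ℝ) = (v j : ℝ) - 1 := by exact_mod_cast (by omega : v (j+1) = v j - 1)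
            rw [hst']
            rw [show m + h*(v j:ℝ) - (m + h*((v j:ℝ)-1)) = h by ring]
            rw [abs_of_pos hhpos]
        calc |Λ s - Λ (su k)| = |Λ s - Λ (u (j+1))| := by
              show |Λ s - Λ (u k.toNat)| = _
              rw [hj]
          _ ≤ |Λ s - Λ (u j)| + |Λ (u j) - Λ (u (j+1))| := abs_sub_le _ _ _
          _ ≤ h + h := add_le_add hb1 hb2
          _ = 2*h := by ring
    have sideB : ∀ l l' : ℤ, 0 ≤ l → l ≤ (N2:ℤ) → 0 ≤ l' → l' ≤ (N2:ℤ) →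
        (l' = l + 1 ∨ l' = l - 1) →
        ∀ t_ ∈ uIcc (tuz l) (tuz l'), |Λ t_ - Λ (tuz l)| ≤ 2 * h := by
      intro l l' hl0 hlN hl'0 hl'N hd t_ ht_
      rcases hd with rfl | rfl
      · have hln : (l+1).toNat = l.toNat + 1 := by omega
        have hllt : l.toNat < N2 := by omega
        have he : uIcc (tuz l) (tuz (l+1)) = uIcc (tu l.toNat) (tu (l.toNat + 1)) := by
          show uIcc (tu l.toNat) (tu (l+1).toNat) = _
          rw [hln]
        rw [he] at ht_
        have hb1 := htuseg l.toNat hllt t_ ht_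
        calc |Λ t_ - Λ (tuz l)| = |Λ t_ - Λ (tu l.toNat)| := rfl
          _ ≤ h := hb1
          _ ≤ 2*h := by linarith
      · have hl1 : 1 ≤ l := by omega
        obtain ⟨j, hj⟩ : ∃ j : ℕ, l.toNat = j + 1 := ⟨l.toNat - 1, by omega⟩
        have hjN : j < N2 := by omega
        have hlm : (l - 1).toNat = j := by omega
        have he : uIcc (tuz l) (tuz (l-1)) = uIcc (tu j) (tu (j+1)) := by
          show uIcc (tu l.toNat) (tu (l-1).toNat) = _
          rw [hlm, hj, Set.uIcc_comm]
        rw [he] at ht_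
        have hb1 := htuseg j hjN t_ ht_
        have hb2 : |Λ (tu j) - Λ (tu (j+1))| ≤ h := by
          rw [htuval j (by omega), htuval (j+1) (by omega)]
          rcases hv2step j hjN with hst | hst
          · have hst' : ((v2 (j+1)):ℝ) = (v2 j : ℝ) + 1 := by exact_mod_cast (by omega : v2 (j+1) = v2 j + 1)
            rw [hst']
            rw [show m + h*(v2 j:ℝ) - (m + h*((v2 j:ℝ)+1)) = -h by ring]
            rw [abs_neg, abs_of_pos hhpos]
          · have hst' : ((v2 (j+1)):ℝ) = (v2 j : ℝ) - 1 := by exact_mod_cast (by omega : v2 (j+1) = v2 j - 1)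
            rw [hst']
            rw [show m + h*(v2 j:ℝ) - (m + h*((v2 j:ℝ)-1)) = h by ring]
            rw [abs_of_pos hhpos]
        calc |Λ t_ - Λ (tuz l)| = |Λ t_ - Λ (tu (j+1))| := by
              show |Λ t_ - Λ (tu l.toNat)| = _
              rw [hj]
          _ ≤ |Λ t_ - Λ (tu j)| + |Λ (tu j) - Λ (tu (j+1))| := abs_sub_le _ _ _
          _ ≤ h + h := add_le_add hb1 hb2
          _ = 2*h := by ring
    have hkey : ∀ x : ℤ × ℤ, Relation.ReflTransGen (DMCT.Adj (N1:ℤ) (N2:ℤ) vz vz') (0,0) x →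
        ((∃ s t : ℝ, s ∈ Icc a b ∧ t ∈ Icc b (a+1) ∧ Φ t - Φ s = 1 ∧ |Λ s - Λ t| ≤ 4 * h) ∨
          1 ≤ Φ (tuz x.2) - Φ (su x.1)) := by
      intro x hx
      induction hx with
      | refl =>
        right
        show 1 ≤ Φ (tuz 0) - Φ (su 0)
        have e1 : tuz 0 = a + 1 := htu0
        have e2 : su 0 = a := hu0
        rw [e1, e2, hΦ1 a]
        linarith
      | @tail y x hr hadj ih =>
        rcases ih with hp | hcy
        · left; exact hp
        · by_cases hx1 : 1 ≤ Φ (tuz x.2) - Φ (su x.1)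
          · right; exact hx1
          · left
            push_neg at hx1
            obtain ⟨hoky, hokx, hd1, hd2⟩ := hadj
            obtain ⟨by1, by2, by3, by4, by5⟩ := hoky
            obtain ⟨bx1, bx2, bx3, bx4, bx5⟩ := hokx
            have hweq : Λ (tuz y.2) = Λ (su y.1) := by
              show Λ (tu y.2.toNat) = Λ (u y.1.toNat)
              rw [htuval y.2.toNat (by omega), hval y.1.toNat (by omega)]
              have he5 : v2 y.2.toNat = v y.1.toNat := by5.symm
              rw [he5]
            apply seg_cross Φ Λ hΦ hab1.le hab2.le hhpos.le
              (humem y.1.toNat (by omega)) (humem x.1.toNat (by omega))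
              (htumem y.2.toNat (by omega)) (htumem x.2.toNat (by omega))
              (sideA y.1 x.1 by1 by2 bx1 bx2 (by omega))
              (by
                intro t_ ht_
                rw [← hweq]
                exact sideB y.2 x.2 by3 by4 bx3 bx4 (by omega) t_ ht_)
              hcy hx1
    rcases hkey ((N1:ℤ),(N2:ℤ)) hreach with hp | hend
    · exact hp
    · -- final segment to (b,b)
      have huNb : u N1 ≤ b := (humem N1 le_rfl).2
      have hbtuN : b ≤ tu N2 := (htumem N2 le_rfl).1
      apply seg_cross Φ Λ hΦ hab1.le hab2.le hhpos.le (w := m)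
        (humem N1 le_rfl) (⟨hab1.le, le_rfl⟩ : b ∈ Icc a b)
        (htumem N2 le_rfl) (⟨le_rfl, hab2.le⟩ : b ∈ Icc b (a+1))
        (by
          intro s hs
          rw [Set.uIcc_of_le huNb] at hs
          calc |Λ s - m| ≤ h := hterm s hs
            _ ≤ 2*h := by linarith)
        (by
          intro t_ ht_
          rw [Set.uIcc_comm, Set.uIcc_of_le hbtuN] at ht_
          calc |Λ t_ - m| ≤ h := htuterm t_ ht_
            _ ≤ 2*h := by linarith)
        hend (by norm_num)
  -- compactness limit
  set K : Set (ℝ × ℝ) := {p | p.1 ∈ Icc a b ∧ p.2 ∈ Icc b (a+1) ∧ Φ p.2 - Φ p.1 = 1} with hK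
  have hKsub : K ⊆ (Icc a b) ×ˢ (Icc b (a+1)) := fun p hp => ⟨hp.1, hp.2.1⟩
  have hKclosed : IsClosed K := by
    have he : K = ((Icc a b) ×ˢ (Icc b (a+1))) ∩ ((fun p : ℝ×ℝ => Φ p.2 - Φ p.1) ⁻¹' {1}) := by
      ext p
      simp only [hK, Set.mem_setOf_eq, Set.mem_inter_iff, Set.mem_prod, Set.mem_preimage,
        Set.mem_singleton_iff]
      tauto
    rw [he]
    exact (isClosed_Icc.prod isClosed_Icc).inter (IsClosed.preimage
      ((hΦ.comp continuous_snd).sub (hΦ.comp continuous_fst)) isClosed_singleton)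
  have hKcompact : IsCompact K :=
    (isCompact_Icc.prod isCompact_Icc).of_isClosed_subset hKclosed hKsub
  have hKne : K.Nonempty := by
    obtain ⟨s, t, h1, h2, h3, h4⟩ := keyQ 1 le_rfl
    exact ⟨(s,t), h1, h2, h3⟩
  obtain ⟨p, hpK, hpmin⟩ := hKcompact.exists_isMinOn hKne
    (Continuous.continuousOn (((hΛ.comp continuous_fst).sub (hΛ.comp continuous_snd)).abs))
  have hzero : |Λ p.1 - Λ p.2| ≤ 0 := by
    by_contra hcon
    push_neg at hcon
    obtain ⟨Q, hQ⟩ := exists_nat_gt (4 * (M - m) / |Λ p.1 - Λ p.2|)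
    have hQ0 : (0:ℝ) < Q :=
      lt_of_le_of_lt (div_nonneg (by linarith) (abs_nonneg _)) hQ
    have hQ1 : 1 ≤ Q := by exact_mod_cast Nat.one_le_iff_ne_zero.mpr (by
      intro hc
      rw [hc] at hQ0
      norm_num at hQ0)
    obtain ⟨s, t, h1, h2, h3, h4⟩ := keyQ Q hQ1
    have hmin := hpmin (⟨h1, h2, h3⟩ : (s,t) ∈ K)
    have h5 : 4*(M-m) < |Λ p.1 - Λ p.2| * Q := by
      rw [div_lt_iff₀ hcon] at hQ
      linarith
    have h6 : 4*((M-m)/(Q:ℝ)) < |Λ p.1 - Λ p.2| := by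
      rw [show 4*((M-m)/(Q:ℝ)) = 4*(M-m)/(Q:ℝ) by ring, div_lt_iff₀ hQ0]
      linarith
    have : |Λ p.1 - Λ p.2| ≤ |Λ s - Λ t| := hmin
    linarith
  have hfin : Λ p.1 = Λ p.2 := by
    have h1 := abs_nonneg (Λ p.1 - Λ p.2)
    have h2 := abs_eq_zero.mp (le_antisymm hzero h1)
    linarith
  exact ⟨p.1, p.2, hfin, hpK.2.2⟩


end

/-- `IsTorusClass γ n m` : the loop `γ` on the torus `T² = ℝ²/ℤ²` has homology class `(n, m)`,
witnessed by continuous lifts of its two coordinates with monodromy `n` and `m`. -/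
def IsTorusClass (γ : AddCircle (1:ℝ) → AddCircle (1:ℝ) × AddCircle (1:ℝ)) (n m : ℤ) : Prop :=
  ∃ F G : ℝ → ℝ, Continuous F ∧ Continuous G ∧
    (∀ t : ℝ, γ (t : AddCircle (1:ℝ)) = ((F t : AddCircle (1:ℝ)), (G t : AddCircle (1:ℝ)))) ∧
    (∀ t : ℝ, F (t + 1) = F t + n) ∧ (∀ t : ℝ, G (t + 1) = G t + m)

/-- The homology class of a simple closed curve on the torus has coprime coordinates. -/
theorem simple_torus_loop_coprime
    (γ : AddCircle (1:ℝ) → AddCircle (1:ℝ) × AddCircle (1:ℝ))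
    (hcont : Continuous γ) (hinj : Function.Injective γ)
    (n m : ℤ) (hclass : IsTorusClass γ n m) (hnm : (n, m) ≠ (0, 0)) :
    Int.gcd n m = 1 := by
  obtain ⟨F, G, hF, hG, hγ, hFn, hGm⟩ := hclass
  set g : ℤ := (Int.gcd n m : ℤ) with hgdef
  have hg0 : g ≠ 0 := by
    intro hc
    rw [hgdef] at hc
    have : Int.gcd n m = 0 := by exact_mod_cast hc
    rw [Int.gcd_eq_zero_iff] at this
    exact hnm (by rw [this.1, this.2])
  have hgnonneg : 0 ≤ g := by
    rw [hgdef]; positivity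
  have hgpos : 1 ≤ g := by omega
  set x : ℤ := Int.gcdA n m with hxdef
  set y : ℤ := Int.gcdB n m with hydef
  have hBez : g = n * x + m * y := Int.gcd_eq_gcd_ab n m
  obtain ⟨n', hn'⟩ : g ∣ n := Int.gcd_dvd_left n m
  obtain ⟨m', hm'⟩ : g ∣ m := Int.gcd_dvd_right n m
  have hunit : n' * x + m' * y = 1 := by
    have h1 : g * (n' * x + m' * y) = g * 1 := by
      have h2 : g * 1 = n * x + m * y := by rw [mul_one]; exact hBez
      rw [h2, hn', hm']; ring
    exact mul_left_cancel₀ hg0 h1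
  have hcomm : m' * n = n' * m := by
    have h2 : g * (m' * n) = g * (n' * m) := by rw [hn', hm']; ring
    exact mul_left_cancel₀ hg0 h2
  set Φ : ℝ → ℝ := fun t => x * F t + y * G t with hΦdef
  set Λ : ℝ → ℝ := fun t => m' * F t - n' * G t with hΛdef
  have hΦc : Continuous Φ := (continuous_const.mul hF).add (continuous_const.mul hG)
  have hΛc : Continuous Λ := (continuous_const.mul hF).sub (continuous_const.mul hG)
  have hΦ1 : ∀ t, Φ (t+1) = Φ t + g := by
    intro t
    show (x:ℝ) * F (t+1) + y * G (t+1) = ((x:ℝ) * F t + y * G t) + g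
    rw [hFn, hGm]
    have hc : (g:ℝ) = (n:ℝ) * x + (m:ℝ) * y := by exact_mod_cast hBez
    rw [hc]; ring
  have hΛ1 : ∀ t, Λ (t+1) = Λ t := by
    intro t
    show (m':ℝ) * F (t+1) - n' * G (t+1) = (m':ℝ) * F t - n' * G t
    rw [hFn, hGm]
    have hc : (m':ℝ) * n = (n':ℝ) * m := by exact_mod_cast hcomm
    nlinarith [hc]
  obtain ⟨s, t, hΛst, hΦst⟩ := exists_unit_jump Φ Λ hΦc hΛc g hgpos hΦ1 hΛ1
  have hunit' : (n':ℝ) * x + m' * y = 1 := by exact_mod_cast hunit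
  have hFrec : ∀ u : ℝ, (n':ℝ) * Φ u + y * Λ u = F u := by
    intro u
    show (n':ℝ) * ((x:ℝ) * F u + y * G u) + y * ((m':ℝ) * F u - n' * G u) = F u
    calc (n':ℝ) * ((x:ℝ) * F u + y * G u) + y * ((m':ℝ) * F u - n' * G u)
        = ((n':ℝ) * x + m' * y) * F u := by ring
      _ = F u := by rw [hunit']; ring
  have hGrec : ∀ u : ℝ, (m':ℝ) * Φ u - x * Λ u = G u := by
    intro u
    show (m':ℝ) * ((x:ℝ) * F u + y * G u) - x * ((m':ℝ) * F u - n' * G u) = G u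
    calc (m':ℝ) * ((x:ℝ) * F u + y * G u) - x * ((m':ℝ) * F u - n' * G u)
        = ((n':ℝ) * x + m' * y) * G u := by ring
      _ = G u := by rw [hunit']; ring
  have hFd : F t - F s = (n' : ℝ) := by
    calc F t - F s = (n':ℝ)*(Φ t - Φ s) + y*(Λ t - Λ s) := by
          rw [← hFrec t, ← hFrec s]; ring
      _ = (n':ℝ) := by rw [hΦst, hΛst]; ring
  have hGd : G t - G s = (m' : ℝ) := by
    calc G t - G s = (m':ℝ)*(Φ t - Φ s) - x*(Λ t - Λ s) := by
          rw [← hGrec t, ← hGrec s]; ring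
      _ = (m':ℝ) := by rw [hΦst, hΛst]; ring
  have hγeq : γ (t : AddCircle (1:ℝ)) = γ (s : AddCircle (1:ℝ)) := by
    rw [hγ t, hγ s]
    have h1 : (F t : AddCircle (1:ℝ)) = F s := by
      rw [QuotientAddGroup.eq_iff_sub_mem]
      rw [AddSubgroup.mem_zmultiples_iff]
      exact ⟨n', by rw [hFd]; simp⟩
    have h2 : (G t : AddCircle (1:ℝ)) = G s := by
      rw [QuotientAddGroup.eq_iff_sub_mem]
      rw [AddSubgroup.mem_zmultiples_iff]
      exact ⟨m', by rw [hGd]; simp⟩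
    rw [h1, h2]
  have hst := hinj hγeq
  have hmem : (t:ℝ) - s ∈ AddSubgroup.zmultiples (1:ℝ) :=
    QuotientAddGroup.eq_iff_sub_mem.mp hst
  obtain ⟨j, hj⟩ := AddSubgroup.mem_zmultiples_iff.mp hmem
  have hjr : (j:ℝ) = t - s := by
    rw [zsmul_eq_mul, mul_one] at hj
    exact hj
  have hΦj : Φ t - Φ s = (j:ℝ) * g := by
    have hiter := iter_monodromy Φ (g:ℝ) hΦ1 j s
    rw [show s + (j:ℝ) = t by linarith] at hiter
    linarith
  have hjg : (1:ℝ) = (j:ℝ) * g := by rw [← hΦst, hΦj]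
  have hjgz : j * g = 1 := by exact_mod_cast hjg.symm
  have hdvd : g ∣ 1 := ⟨j, by rw [← hjgz]; ring⟩
  have hg1 : g = 1 := by
    rcases Int.isUnit_iff.mp (isUnit_of_dvd_one hdvd) with h | h
    · exact h
    · omega
  rw [hgdef] at hg1
  exact_mod_cast hg1
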